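/- Let K and L be number fields with [K:ℚ] = [L:ℚ]. Suppose there exists a group isomorphism φ : P_K^1 → P_L^1 such that N(φ(I)) = N(I) for every I ∈ P_K^1. Then for every rational prime p, the ideal pO_K is a prime ideal of O_K if and only if pO_L is a prime ideal of O_L. -/

import Mathlib

open NumberField nonZeroDivisors

/-- The subgroup of `Kˣ` consisting of the totally positive elements. -/
def totallyPositiveUnits (K : Type*) [Field K] : Subgroup Kˣ where
  carrier := {u | ∀ φ : K →+* ℝ, 0 < φ (u : K)}
  one_mem' := fun φ => by simp
  mul_mem' := fun {a b} ha hb φ => by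
    rw [Units.val_mul, map_mul]; exact mul_pos (ha φ) (hb φ)
  inv_mem' := fun {a} ha φ => by
    rw [Units.val_inv_eq_inv_val, map_inv₀]; exact inv_pos.mpr (ha φ)

/-- `P_K^1`: the group of narrowly principal fractional ideals of a number field `K`, i.e. the
invertible fractional ideals of the form `a 𝓞_K` with `a ∈ K` totally positive. -/
noncomputable def narrowPrincipalSubgroup (K : Type*) [Field K] [NumberField K] :
    Subgroup (FractionalIdeal (𝓞 K)⁰ K)ˣ :=
  (totallyPositiveUnits K).map (toPrincipalIdeal (𝓞 K) K)

/-- The absolute ideal norm on `P_K^1`. -/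
noncomputable def narrowNorm {K : Type*} [Field K] [NumberField K]
    (I : ↥(narrowPrincipalSubgroup K)) : ℚ :=
  FractionalIdeal.absNorm ((I : (FractionalIdeal (𝓞 K)⁰ K)ˣ) : FractionalIdeal (𝓞 K)⁰ K)

set_option synthInstance.maxHeartbeats 1000000
set_option maxHeartbeats 1600000

section Aux

variable {K : Type*} [Field K] [NumberField K]

lemma absNorm_span_natCast (p : ℕ) :
    Ideal.absNorm (Ideal.span {(p : 𝓞 K)}) = p ^ Module.finrank ℚ K := by
  have h : (p : 𝓞 K) = algebraMap ℤ (𝓞 K) (p : ℤ) := by simp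
  rw [Ideal.absNorm_span_singleton, h,
    Algebra.norm_algebraMap_of_basis (RingOfIntegers.basis K) (p : ℤ)]
  rw [← Module.finrank_eq_card_basis (RingOfIntegers.basis K), RingOfIntegers.rank]
  simp [Int.natAbs_pow]

lemma span_natCast_ne_bot {p : ℕ} (hp : p.Prime) :
    (Ideal.span {(p : 𝓞 K)} : Ideal (𝓞 K)) ≠ ⊥ := by
  simp only [ne_eq, Ideal.span_singleton_eq_bot]
  exact_mod_cast hp.ne_zero ∘ fun h => by exact_mod_cast Nat.cast_injective h

lemma exists_maximal_le_mem_of_dvd_absNorm {J : Ideal (𝓞 K)} (hJ : J ≠ ⊥) {p : ℕ}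
    (hp : p.Prime) (hdvd : p ∣ Ideal.absNorm J) :
    ∃ Q : Ideal (𝓞 K), Q.IsMaximal ∧ J ≤ Q ∧ (p : 𝓞 K) ∈ Q := by
  haveI := Fact.mk hp
  letI : Fintype ((𝓞 K) ⧸ J) := @Fintype.ofFinite _ (Ideal.finiteQuotientOfFreeOfNeBot J hJ)
  have hcard : Ideal.absNorm J = Fintype.card ((𝓞 K) ⧸ J) := by
    rw [Ideal.absNorm_apply, Submodule.cardQuot_apply, Nat.card_eq_fintype_card]
  rw [hcard] at hdvd
  obtain ⟨x, hx⟩ := exists_prime_addOrderOf_dvd_card (G := (𝓞 K) ⧸ J) p hdvd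
  obtain ⟨a, rfl⟩ := Ideal.Quotient.mk_surjective x
  have hpa : (p : 𝓞 K) * a ∈ J := by
    have h1 : p • (Ideal.Quotient.mk J a) = 0 := by
      rw [← hx]; exact addOrderOf_nsmul_eq_zero _
    rwa [← map_nsmul, Ideal.Quotient.eq_zero_iff_mem, nsmul_eq_mul] at h1
  have haJ : a ∉ J := by
    intro h
    have : Ideal.Quotient.mk J a = 0 := Ideal.Quotient.eq_zero_iff_mem.mpr h
    rw [this, addOrderOf_zero] at hx
    exact hp.ne_one hx.symm
  have hne : J ⊔ Ideal.span {(p : 𝓞 K)} ≠ ⊤ := by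
    intro htop
    have h1 : (1 : 𝓞 K) ∈ J ⊔ Ideal.span {(p : 𝓞 K)} := htop ▸ Submodule.mem_top
    obtain ⟨j, hj, y, hy, hjy⟩ := Submodule.mem_sup.mp h1
    obtain ⟨c, rfl⟩ := Ideal.mem_span_singleton'.mp hy
    apply haJ
    have : a = a * j + c * ((p : 𝓞 K) * a) := by linear_combination (-a) * hjy
    rw [this]
    exact J.add_mem (J.mul_mem_left a hj) (J.mul_mem_left c hpa)
  obtain ⟨Q, hQmax, hQ⟩ := Ideal.exists_le_maximal _ hne
  exact ⟨Q, hQmax, le_trans le_sup_left hQ,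
    (Ideal.span_singleton_le_iff_mem _).mp (le_trans le_sup_right hQ)⟩

lemma finrank_dvd_padicValNat_absNorm {p : ℕ} (hp : p.Prime)
    (hPrime : (Ideal.span {(p : 𝓞 K)}).IsPrime) (J : Ideal (𝓞 K)) (hJ : J ≠ ⊥) :
    Module.finrank ℚ K ∣ padicValNat p (Ideal.absNorm J) := by
  haveI := Fact.mk hp
  set n := Module.finrank ℚ K with hn
  have hmax : (Ideal.span {(p : 𝓞 K)}).IsMaximal :=
    Ideal.IsPrime.isMaximal hPrime (span_natCast_ne_bot hp)
  suffices H : ∀ m : ℕ, ∀ J : Ideal (𝓞 K), J ≠ ⊥ → Ideal.absNorm J = m →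
      n ∣ padicValNat p m from H _ J hJ rfl
  intro m
  induction m using Nat.strong_induction_on with
  | _ m IH =>
    intro J hJ hm
    by_cases hdvd : p ∣ m
    · obtain ⟨Q, hQmax, hJQ, hpQ⟩ := exists_maximal_le_mem_of_dvd_absNorm hJ hp (hm ▸ hdvd)
      have hQ : Ideal.span {(p : 𝓞 K)} = Q :=
        hmax.eq_of_le hQmax.ne_top ((Ideal.span_singleton_le_iff_mem _).mpr hpQ)
      obtain ⟨J', hJ'⟩ := Ideal.dvd_iff_le.mpr (hQ ▸ hJQ : J ≤ Ideal.span {(p : 𝓞 K)})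
      have hJ'ne : J' ≠ ⊥ := by
        rintro rfl; rw [Ideal.mul_bot] at hJ'; exact hJ hJ'
      have hm' : Ideal.absNorm J' ≠ 0 := by
        rw [ne_eq, Ideal.absNorm_eq_zero_iff]; exact hJ'ne
      have hfact : m = p ^ n * Ideal.absNorm J' := by
        rw [← hm, hJ', map_mul, absNorm_span_natCast]
      have hlt : Ideal.absNorm J' < m := by
        rw [hfact]
        have h2 : 2 ≤ p ^ n := by
          calc 2 ≤ p := hp.two_le
          _ = p ^ 1 := (pow_one p).symm
          _ ≤ p ^ n := Nat.pow_le_pow_right hp.pos Module.finrank_pos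
        calc Ideal.absNorm J' < 2 * Ideal.absNorm J' := by omega
        _ ≤ p ^ n * Ideal.absNorm J' := Nat.mul_le_mul_right _ h2
      have hval : padicValNat p m = n + padicValNat p (Ideal.absNorm J') := by
        rw [hfact, padicValNat.mul (pow_ne_zero _ hp.pos.ne') hm', padicValNat.prime_pow]
      rw [hval]
      exact Nat.dvd_add (dvd_refl n) (IH _ hlt J' hJ'ne rfl)
    · rw [padicValNat.eq_zero_of_not_dvd hdvd]; exact dvd_zero _

lemma forward_dir {p : ℕ} (hp : p.Prime) (hPrime : (Ideal.span {(p : 𝓞 K)}).IsPrime) :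
    ∀ I : ↥(narrowPrincipalSubgroup K),
      (Module.finrank ℚ K : ℤ) ∣ padicValRat p (narrowNorm I) := by
  haveI := Fact.mk hp
  rintro ⟨I, hI⟩
  obtain ⟨u, hu, hui⟩ := hI
  obtain ⟨x, y, hy, hxy⟩ := IsFractionRing.div_surjective (A := 𝓞 K) (u : K)
  have hyne0 : y ≠ 0 := nonZeroDivisors.ne_zero hy
  have hyne : algebraMap (𝓞 K) K y ≠ 0 := by
    simpa using (map_ne_zero_iff _ (IsFractionRing.injective (𝓞 K) K)).mpr hyne0
  have hune : (u : K) ≠ 0 := u.ne_zero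
  have hux : (u : K) * algebraMap (𝓞 K) K y = algebraMap (𝓞 K) K x := by
    rw [← hxy, div_mul_cancel₀ _ hyne]
  have hxne0 : x ≠ 0 := by
    intro h
    rw [h, map_zero, mul_eq_zero] at hux
    exact hux.elim hune hyne
  have hidl : FractionalIdeal.spanSingleton (𝓞 K)⁰ (u : K) *
      ((Ideal.span {y} : Ideal (𝓞 K)) : FractionalIdeal (𝓞 K)⁰ K) =
      ((Ideal.span {x} : Ideal (𝓞 K)) : FractionalIdeal (𝓞 K)⁰ K) := by
    rw [FractionalIdeal.coeIdeal_span_singleton, FractionalIdeal.coeIdeal_span_singleton,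
      FractionalIdeal.spanSingleton_mul_spanSingleton, hux]
  have hnorm : FractionalIdeal.absNorm ((I : (FractionalIdeal (𝓞 K)⁰ K)ˣ) :
        FractionalIdeal (𝓞 K)⁰ K) * (Ideal.absNorm (Ideal.span {y}) : ℚ) =
      (Ideal.absNorm (Ideal.span {x}) : ℚ) := by
    rw [← hui, coe_toPrincipalIdeal, ← FractionalIdeal.coeIdeal_absNorm (K := K),
      ← FractionalIdeal.coeIdeal_absNorm (K := K), ← map_mul, hidl]
  have hNy : (Ideal.absNorm (Ideal.span {y}) : ℚ) ≠ 0 := by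
    simp only [ne_eq, Nat.cast_eq_zero, Ideal.absNorm_eq_zero_iff,
      Ideal.span_singleton_eq_bot]
    exact hyne0
  have hNx : (Ideal.absNorm (Ideal.span {x}) : ℚ) ≠ 0 := by
    simp only [ne_eq, Nat.cast_eq_zero, Ideal.absNorm_eq_zero_iff,
      Ideal.span_singleton_eq_bot]
    exact hxne0
  have hval : narrowNorm ⟨I, ⟨u, hu, hui⟩⟩ =
      (Ideal.absNorm (Ideal.span {x}) : ℚ) / (Ideal.absNorm (Ideal.span {y}) : ℚ) := by
    unfold narrowNorm
    rw [eq_div_iff hNy]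
    exact hnorm
  rw [hval, padicValRat.div (p := p) hNx hNy, padicValRat.of_nat, padicValRat.of_nat]
  exact dvd_sub
    (Int.natCast_dvd_natCast.mpr (finrank_dvd_padicValNat_absNorm hp hPrime _
      (by simpa [Ideal.span_singleton_eq_bot] using hxne0)))
    (Int.natCast_dvd_natCast.mpr (finrank_dvd_padicValNat_absNorm hp hPrime _
      (by simpa [Ideal.span_singleton_eq_bot] using hyne0)))

lemma converse_dir {p : ℕ} (hp : p.Prime) (hPrime : ¬ (Ideal.span {(p : 𝓞 K)}).IsPrime) :
    ∃ I : ↥(narrowPrincipalSubgroup K),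
      ¬ (Module.finrank ℚ K : ℤ) ∣ padicValRat p (narrowNorm I) := by
  haveI := Fact.mk hp
  set n := Module.finrank ℚ K with hn
  have hbot := span_natCast_ne_bot (K := K) hp
  have hnormp := absNorm_span_natCast (K := K) p
  rw [← hn] at hnormp
  have htop : Ideal.span {(p : 𝓞 K)} ≠ ⊤ := by
    intro h
    rw [h, Ideal.absNorm_top] at hnormp
    have h1 : 1 < p ^ n := Nat.one_lt_pow (hn ▸ Module.finrank_pos.ne') hp.one_lt
    omega
  -- a maximal ideal over p
  obtain ⟨P, hPmax, hPle⟩ := Ideal.exists_le_maximal _ htop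
  have hpP : (p : 𝓞 K) ∈ P := (Ideal.span_singleton_le_iff_mem _).mp hPle
  have hPne : P ≠ ⊥ := by
    rintro rfl
    exact hbot (le_bot_iff.mp hPle)
  -- the residue field
  letI : Fintype ((𝓞 K) ⧸ P) := @Fintype.ofFinite _ (Ideal.finiteQuotientOfFreeOfNeBot P hPne)
  haveI := hPmax
  letI : Field ((𝓞 K) ⧸ P) := Ideal.Quotient.field P
  have hp0 : ((p : ℕ) : (𝓞 K) ⧸ P) = 0 := by
    rw [← map_natCast (Ideal.Quotient.mk P), Ideal.Quotient.eq_zero_iff_mem]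
    exact hpP
  haveI : CharP ((𝓞 K) ⧸ P) p := (CharP.charP_iff_prime_eq_zero hp).mpr hp0
  obtain ⟨f, -, hcard⟩ := FiniteField.card ((𝓞 K) ⧸ P) p
  have hNP : Ideal.absNorm P = p ^ (f : ℕ) := by
    rw [Ideal.absNorm_apply, Submodule.cardQuot_apply, Nat.card_eq_fintype_card, hcard]
  -- f < n
  obtain ⟨C₀, hC₀⟩ := Ideal.dvd_iff_le.mpr hPle
  have hfn : (f : ℕ) < n := by
    have hdvd : p ^ (f : ℕ) ∣ p ^ n := by
      rw [← hNP, ← hnormp, hC₀, map_mul]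
      exact Dvd.intro _ rfl
    have hle : (f : ℕ) ≤ n := (Nat.pow_dvd_pow_iff_le_right hp.one_lt).mp hdvd
    rcases lt_or_eq_of_le hle with h | h
    · exact h
    · exfalso
      have hpn : (0:ℕ) < p ^ n := pow_pos hp.pos _
      have heq : p ^ n * Ideal.absNorm C₀ = p ^ n * 1 := by
        rw [mul_one]
        conv_rhs => rw [← hnormp, hC₀, map_mul, hNP, h]
      have h1 : Ideal.absNorm C₀ = 1 := Nat.eq_of_mul_eq_mul_left hpn heq
      rw [Ideal.absNorm_eq_one_iff] at h1
      rw [h1, Ideal.mul_top] at hC₀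
      exact hPrime (hC₀ ▸ hPmax.isPrime)
  have hf0 : 0 < (f : ℕ) := f.2
  -- max power decomposition : span p = P ^ e * C with ¬ P ∣ C
  have hPirr : Irreducible P := (Ideal.prime_of_isPrime hPne hPmax.isPrime).irreducible
  obtain ⟨e, C, hPC, hspan⟩ := WfDvdMonoid.max_power_factor hbot hPirr
  have hpC : (p : 𝓞 K) ∈ C := by
    have : Ideal.span {(p : 𝓞 K)} ≤ C := hspan ▸ Ideal.mul_le_right
    exact this (Ideal.mem_span_singleton_self _)
  -- an element π₀ of P \ P^2
  have hP2lt : P ^ 2 < P := by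
    refine lt_of_le_of_ne (by rw [pow_two]; exact Ideal.mul_le_left) ?_
    intro h
    have h2 : P * P = P * ⊤ := by rw [Ideal.mul_top, ← pow_two, h]
    exact hPmax.ne_top (mul_left_cancel₀ hPne h2)
  obtain ⟨π₀, hπ₀P, hπ₀P2⟩ := SetLike.exists_of_lt hP2lt
  -- coprimality of P^2 and C
  have hcop : P ^ 2 ⊔ C = ⊤ := by
    by_contra hne
    obtain ⟨M, hMmax, hM⟩ := Ideal.exists_le_maximal _ hne
    have hPM : P ≤ M := hMmax.isPrime.le_of_pow_le (le_trans le_sup_left hM)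
    have : P = M := hPmax.eq_of_le hMmax.ne_top hPM
    exact hPC (Ideal.dvd_iff_le.mpr (this ▸ le_trans le_sup_right hM))
  have h1mem : (1 : 𝓞 K) ∈ P ^ 2 ⊔ C := hcop ▸ Submodule.mem_top
  obtain ⟨a, ha, c, hc, hac⟩ := Submodule.mem_sup.mp h1mem
  set π : 𝓞 K := c * π₀ + a with hπdef
  have hππ₀ : π - π₀ ∈ P ^ 2 := by
    have hrw : π - π₀ = a * (1 - π₀) := by rw [hπdef]; linear_combination π₀ * hac
    rw [hrw]
    exact (P ^ 2).mul_mem_right _ ha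
  have hπP : π ∈ P := by
    have : π = (π - π₀) + π₀ := by ring
    rw [this]
    exact P.add_mem (Ideal.pow_le_self two_ne_zero hππ₀) hπ₀P
  have hπ1C : π - 1 ∈ C := by
    have hrw : π - 1 = c * (π₀ - 1) := by rw [hπdef]; linear_combination hac
    rw [hrw]
    exact C.mul_mem_right _ hc
  -- adjust for total positivity
  set t : ℕ := (Finset.univ.sup fun ψ : K →+* ℝ =>
      ⌈|ψ (algebraMap (𝓞 K) K π)|⌉₊) + 1 with ht_def
  set α : 𝓞 K := π + (t : 𝓞 K) * (p : 𝓞 K) ^ 2 with hα_def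
  have hp2P2 : (p : 𝓞 K) ^ 2 ∈ P ^ 2 := by
    rw [pow_two, pow_two]
    exact Ideal.mul_mem_mul hpP hpP
  have htpP2 : (t : 𝓞 K) * (p : 𝓞 K) ^ 2 ∈ P ^ 2 := (P ^ 2).mul_mem_left _ hp2P2
  have hαπ : α - π ∈ P ^ 2 := by
    have : α - π = (t : 𝓞 K) * (p : 𝓞 K) ^ 2 := by rw [hα_def]; ring
    rw [this]; exact htpP2
  have hαP : α ∈ P := by
    have : α = (α - π) + π := by ring
    rw [this]
    exact P.add_mem (Ideal.pow_le_self two_ne_zero hαπ) hπP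
  have hαP2 : α ∉ P ^ 2 := by
    intro h
    apply hπ₀P2
    have h1 : π ∈ P ^ 2 := by
      have : π = α - (α - π) := by ring
      rw [this]; exact (P ^ 2).sub_mem h hαπ
    have : π₀ = π - (π - π₀) := by ring
    rw [this]; exact (P ^ 2).sub_mem h1 hππ₀
  have hα1C : α - 1 ∈ C := by
    have : α - 1 = (π - 1) + (t : 𝓞 K) * (p : 𝓞 K) ^ 2 := by rw [hα_def]; ring
    rw [this]
    refine C.add_mem hπ1C (C.mul_mem_left _ ?_)
    rw [pow_two]
    exact C.mul_mem_right _ hpC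
  have hα0 : α ≠ 0 := by
    intro h
    exact hαP2 (h ▸ (P ^ 2).zero_mem)
  -- total positivity
  have hαpos : ∀ ψ : K →+* ℝ, 0 < ψ (algebraMap (𝓞 K) K α) := by
    intro ψ
    have hval : ψ (algebraMap (𝓞 K) K α) =
        ψ (algebraMap (𝓞 K) K π) + (t : ℝ) * (p : ℝ) ^ 2 := by
      rw [hα_def]
      push_cast [map_add, map_mul, map_pow, map_natCast]
      ring_nf
    have hb : |ψ (algebraMap (𝓞 K) K π)| < (t : ℝ) := by
      have h1 : |ψ (algebraMap (𝓞 K) K π)| ≤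
          (⌈|ψ (algebraMap (𝓞 K) K π)|⌉₊ : ℝ) := Nat.le_ceil _
      have h2 : (⌈|ψ (algebraMap (𝓞 K) K π)|⌉₊ : ℕ) <  t := by
        rw [ht_def]
        exact Nat.lt_succ_of_le (Finset.le_sup (f := fun ψ : K →+* ℝ => ⌈|ψ (algebraMap (𝓞 K) K π)|⌉₊) (Finset.mem_univ ψ))
      calc |ψ (algebraMap (𝓞 K) K π)| ≤ _ := h1
        _ < (t : ℝ) := by exact_mod_cast h2
    have hp1 : (1 : ℝ) ≤ (p : ℝ) ^ 2 := by
      have : (1 : ℝ) ≤ (p : ℝ) := by exact_mod_cast hp.pos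
      nlinarith
    rw [hval]
    have := neg_abs_le (ψ (algebraMap (𝓞 K) K π))
    nlinarith [Nat.cast_nonneg (α := ℝ) t]
  -- build the narrowly principal fractional ideal
  have hαK : algebraMap (𝓞 K) K α ≠ 0 := by
    rw [map_ne_zero_iff _ (IsFractionRing.injective (𝓞 K) K)]
    exact hα0
  set u : Kˣ := Units.mk0 (algebraMap (𝓞 K) K α) hαK with hu_def
  have hu : u ∈ totallyPositiveUnits K := fun ψ => hαpos ψ
  refine ⟨⟨toPrincipalIdeal (𝓞 K) K u, Subgroup.mem_map.mpr ⟨u, hu, rfl⟩⟩, ?_⟩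
  -- norm computation
  have hspanα : Ideal.span {α} ≠ ⊥ := by
    simpa [ne_eq, Ideal.span_singleton_eq_bot] using hα0
  obtain ⟨J, hJ⟩ := Ideal.dvd_iff_le.mpr ((Ideal.span_singleton_le_iff_mem _).mpr hαP)
  have hJb : J ≠ ⊥ := by
    rintro rfl; rw [Ideal.mul_bot] at hJ; exact hspanα hJ
  have hNJ0 : Ideal.absNorm J ≠ 0 := by rwa [ne_eq, Ideal.absNorm_eq_zero_iff]
  have hpJ : ¬ p ∣ Ideal.absNorm J := by
    intro hdvd
    obtain ⟨Q, hQmax, hJQ, hpQ⟩ := exists_maximal_le_mem_of_dvd_absNorm hJb hp hdvd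
    have hQsp : Ideal.span {(p : 𝓞 K)} ≤ Q := (Ideal.span_singleton_le_iff_mem _).mpr hpQ
    rw [hspan] at hQsp
    rcases hQmax.isPrime.mul_le.mp hQsp with hPe | hCQ
    · have hPQ : P ≤ Q := hQmax.isPrime.le_of_pow_le hPe
      have hPQe : P = Q := hPmax.eq_of_le hQmax.ne_top hPQ
      have hdvd2 : P ^ 2 ∣ Ideal.span {α} := by
        rw [hJ, pow_two]
        exact mul_dvd_mul_left P (Ideal.dvd_iff_le.mpr (hPQe ▸ hJQ))
      exact hαP2 (Ideal.dvd_iff_le.mp hdvd2 (Ideal.mem_span_singleton_self _))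
    · have hαQ : α ∈ Q :=
        (le_trans (hJ ▸ Ideal.mul_le_right) hJQ) (Ideal.mem_span_singleton_self α)
      have h1Q : (1 : 𝓞 K) ∈ Q := by
        have h1 : (1 : 𝓞 K) = α - (α - 1) := by ring
        rw [h1]; exact Q.sub_mem hαQ (hCQ hα1C)
      exact hQmax.ne_top ((Ideal.eq_top_iff_one _).mpr h1Q)
  have hNα : Ideal.absNorm (Ideal.span {α}) = p ^ (f : ℕ) * Ideal.absNorm J := by
    rw [hJ, map_mul, hNP]
  have hval : padicValNat p (Ideal.absNorm (Ideal.span {α})) = (f : ℕ) := by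
    rw [hNα, padicValNat.mul (pow_ne_zero _ hp.pos.ne') hNJ0, padicValNat.prime_pow,
      padicValNat.eq_zero_of_not_dvd hpJ, add_zero]
  have hnn : narrowNorm (⟨toPrincipalIdeal (𝓞 K) K u, Subgroup.mem_map.mpr ⟨u, hu, rfl⟩⟩ :
      ↥(narrowPrincipalSubgroup K)) = (Ideal.absNorm (Ideal.span {α}) : ℚ) := by
    unfold narrowNorm
    rw [show (((⟨toPrincipalIdeal (𝓞 K) K u, Subgroup.mem_map.mpr ⟨u, hu, rfl⟩⟩ :
        ↥(narrowPrincipalSubgroup K)) : (FractionalIdeal (𝓞 K)⁰ K)ˣ) :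
        FractionalIdeal (𝓞 K)⁰ K) = FractionalIdeal.spanSingleton (𝓞 K)⁰ (u : K) from
      coe_toPrincipalIdeal _]
    rw [show ((u : Kˣ) : K) = algebraMap (𝓞 K) K α from rfl]
    rw [← FractionalIdeal.coeIdeal_span_singleton,
      FractionalIdeal.coeIdeal_absNorm (K := K)]
  rw [hnn, padicValRat.of_nat, hval]
  intro hdvd
  rw [Int.natCast_dvd_natCast] at hdvd
  have := Nat.le_of_dvd hf0 hdvd
  omega

lemma main_iff {p : ℕ} (hp : p.Prime) :
    (Ideal.span {(p : 𝓞 K)}).IsPrime ↔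
      ∀ I : ↥(narrowPrincipalSubgroup K),
        (Module.finrank ℚ K : ℤ) ∣ padicValRat p (narrowNorm I) := by
  constructor
  · exact fun h => forward_dir hp h
  · intro h
    by_contra hc
    obtain ⟨I, hI⟩ := converse_dir hp hc
    exact hI (h I)

end Aux

/-- If `K` and `L` are number fields of the same degree and there is a
norm-preserving group isomorphism `P_K^1 ≃ P_L^1`, then a rational prime `p` is non-split in `K`
iff it is non-split in `L`. -/
theorem span_isPrime_iff_of_narrowPrincipal_isom
    (K L : Type*) [Field K] [NumberField K] [Field L] [NumberField L]
    (hdeg : Module.finrank ℚ K = Module.finrank ℚ L)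
    (φ : ↥(narrowPrincipalSubgroup K) ≃* ↥(narrowPrincipalSubgroup L))
    (hφ : ∀ I : ↥(narrowPrincipalSubgroup K), narrowNorm (φ I) = narrowNorm I)
    (p : ℕ) (hp : p.Prime) :
    (Ideal.span {(p : 𝓞 K)}).IsPrime ↔ (Ideal.span {(p : 𝓞 L)}).IsPrime := by
  rw [main_iff hp, main_iff hp, ← hdeg]
  constructor
  · intro h I
    have := hφ (φ.symm I)
    rw [φ.apply_symm_apply] at this
    rw [this]
    exact h _
  · intro h I
    rw [← hφ I]
    exact h _
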